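/- Let f : ℝⁿ → ℝᵐ be a function, 1 ≤ k ≤ n - m + 1, and ℓ = n - m - k + 1. If N is a subset of {x : limsup_{h→0} |f(x+h)-f(x)|/|h|^k < ∞} with 𝓛ⁿ(N) = 0, then 𝓗^ℓ(N ∩ f⁻¹(y)) = 0 for 𝓛ᵐ-almost every y ∈ ℝᵐ. -/

import Mathlib

open MeasureTheory Asymptotics Filter
open scoped ENNReal Topology

theorem pointwise_holder_null_fibers
    (n m : ℕ) (hm : 0 < m) (hnm : m ≤ n) (k : ℕ) (hk1 : 1 ≤ k) (hk2 : k ≤ n - m + 1)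
    (ℓ : ℕ) (hℓ : ℓ = n - m - k + 1)
    (f : (Fin n → ℝ) → (Fin m → ℝ)) (N : Set (Fin n → ℝ))
    (hN : N ⊆ {x | (fun h => f (x + h) - f x) =O[nhds 0] fun h => ‖h‖ ^ k})
    (hNnull : volume N = 0) :
    ∀ᵐ y : Fin m → ℝ, μH[(ℓ : ℝ)] (N ∩ f ⁻¹' {y}) = 0 := by
  classical
  -- key exponent inequality
  have key : n ≤ ℓ + k * m := by
    obtain ⟨a, rfl⟩ := Nat.exists_eq_add_of_le hk1
    obtain ⟨b, rfl⟩ := Nat.exists_eq_add_of_le hm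
    have h3 : n ≤ ℓ + 1 + a + b := by omega
    calc n ≤ ℓ + 1 + a + b := h3
      _ ≤ ℓ + 1 + a + b + a * b := Nat.le_add_right _ _
      _ = ℓ + (1 + a) * (1 + b) := by ring
  have hℓ1 : 1 ≤ ℓ := by omega
  -- the uniform Hölder pieces
  set C : ℕ → Set (Fin n → ℝ) := fun j =>
    {x | ∀ h : Fin n → ℝ, ‖h‖ ≤ 1 / (j + 1) → ‖f (x + h) - f x‖ ≤ (j : ℝ) * ‖h‖ ^ k}
    with hCdef
  have hNsub : N ⊆ ⋃ j, N ∩ C j := by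
    intro x hx
    obtain ⟨c, hc⟩ := (hN hx).bound
    rw [Metric.eventually_nhds_iff] at hc
    obtain ⟨ε, hε, hball⟩ := hc
    obtain ⟨j0, hj0⟩ := exists_nat_ge c
    obtain ⟨j1, hj1⟩ := exists_nat_one_div_lt hε
    refine Set.mem_iUnion.2 ⟨max j0 j1, hx, ?_⟩
    intro h hh
    have hcast : (j1 : ℝ) ≤ (max j0 j1 : ℕ) := Nat.cast_le.2 (le_max_right j0 j1)
    have hlt : (1 : ℝ) / (max j0 j1 + 1) ≤ 1 / (j1 + 1) := by
      apply one_div_le_one_div_of_le (by positivity)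
      linarith
    have hd : dist h 0 < ε := by
      rw [dist_zero_right]
      exact lt_of_le_of_lt (hh.trans hlt) hj1
    have := hball hd
    have hnn : (0:ℝ) ≤ ‖h‖ ^ k := by positivity
    calc ‖f (x + h) - f x‖ ≤ c * ‖‖h‖ ^ k‖ := this
      _ = c * ‖h‖ ^ k := by rw [Real.norm_of_nonneg hnn]
      _ ≤ ((max j0 j1 : ℕ) : ℝ) * ‖h‖ ^ k := by
          apply mul_le_mul_of_nonneg_right _ hnn
          rw [Nat.cast_max]
          exact hj0.trans (le_max_left _ _)
  -- main per-piece statement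
  have main : ∀ j : ℕ, ∀ᵐ y : Fin m → ℝ, μH[(ℓ : ℝ)] ((N ∩ C j) ∩ f ⁻¹' {y}) = 0 := by
    intro j
    set S : Set (Fin n → ℝ) := N ∩ C j with hSdef
    have hSnull : volume S = 0 := measure_mono_null Set.inter_subset_left hNnull
    -- Besicovitch covers of `S` by small balls centered in `S`
    have cov : ∀ p : ℕ, ∃ (t : Set (Fin n → ℝ)) (r : (Fin n → ℝ) → ℝ),
        t.Countable ∧ t ⊆ S ∧
        (∀ x ∈ t, r x ∈ Set.Ioo (0:ℝ) (min ((1:ℝ)/(j+1)) (1/(p+1)))) ∧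
        (S ⊆ ⋃ x ∈ t, Metric.closedBall x (r x)) ∧
        (∑' x : t, volume (Metric.closedBall (x : Fin n → ℝ) (r x))) ≤ ((p : ℝ≥0∞) + 1)⁻¹ := by
      intro p
      have hne : ((p : ℝ≥0∞) + 1)⁻¹ ≠ 0 := ENNReal.inv_ne_zero.2 (by simp)
      have hpos : (0:ℝ) < min ((1:ℝ)/(j+1)) (1/(p+1)) := by
        exact lt_min_iff.mpr ⟨by positivity, by positivity⟩
      obtain ⟨t, r, h1, h2, h3, h4, h5⟩ :=
        Besicovitch.exists_closedBall_covering_tsum_measure_le volume hne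
          (fun _ => Set.Ioo (0:ℝ) (min ((1:ℝ)/(j+1)) (1/(p+1)))) S
          (by
            intro x _ δ hδ
            have hx0 : (0:ℝ) < min (min ((1:ℝ)/(j+1)) (1/(p+1))) δ := lt_min hpos hδ
            exact ⟨min (min ((1:ℝ)/(j+1)) (1/(p+1))) δ / 2,
              ⟨half_pos hx0, (half_lt_self hx0).trans_le (min_le_left _ _)⟩,
              ⟨half_pos hx0, (half_lt_self hx0).trans_le (min_le_right _ _)⟩⟩)
      exact ⟨t, r, h1, h2, h3, h4, by rwa [hSnull, zero_add] at h5⟩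
    choose t r tct tsub trad tcov tsumle using cov
    haveI : ∀ p, Countable ↥(t p) := fun p => (tct p).to_subtype
    have hℓpos : (0:ℝ) < (ℓ:ℝ) := by exact_mod_cast hℓ1
    -- the majorant functions
    set g : ℕ → (Fin m → ℝ) → ℝ≥0∞ := fun p y =>
      ∑' i : t p, Set.indicator
        (Metric.closedBall (f i) ((j:ℝ) * (r p i)^k))
        (fun _ => ENNReal.ofReal (2 * r p (i : Fin n → ℝ)) ^ (ℓ:ℝ)) y with hgdef
    have gmeas : ∀ p, Measurable (g p) := fun p =>
      Measurable.ennreal_tsum fun i =>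
        measurable_const.indicator Metric.isClosed_closedBall.measurableSet
    -- basic facts about radii
    have hr0 : ∀ p (i : t p), 0 < r p i := fun p i => (trad p i i.2).1
    have hrj : ∀ p (i : t p), r p i ≤ 1/(j+1) := fun p i =>
      ((trad p i i.2).2.le).trans (min_le_left _ _)
    have hrp : ∀ p (i : t p), r p i ≤ 1/(p+1) := fun p i =>
      ((trad p i i.2).2.le).trans (min_le_right _ _)
    have hr1 : ∀ p (i : t p), r p i ≤ 1 := fun p i => (hrj p i).trans (by
      rw [div_le_one (by positivity)]
      simp [Nat.cast_nonneg])
    -- diameter bound for the pieces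
    have hdiam : ∀ p (i : t p) (A : Set (Fin n → ℝ)),
        EMetric.diam (Metric.closedBall (i : Fin n → ℝ) (r p i) ∩ A)
          ≤ ENNReal.ofReal (2 * r p i) := by
      intro p i A
      calc EMetric.diam (Metric.closedBall (i : Fin n → ℝ) (r p i) ∩ A)
          ≤ EMetric.diam (Metric.closedBall (i : Fin n → ℝ) (r p i)) :=
            EMetric.diam_mono Set.inter_subset_left
        _ ≤ 2 * ENNReal.ofReal (r p i) := by
            rw [← Metric.emetric_closedBall (hr0 p i).le]
            exact EMetric.diam_closedBall
        _ = ENNReal.ofReal (2 * r p i) := by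
            rw [ENNReal.ofReal_mul (by norm_num : (0:ℝ) ≤ 2)]
            norm_num
    -- pointwise domination of the Hausdorff measure of fibers
    have hpt : ∀ y : Fin m → ℝ,
        μH[(ℓ:ℝ)] (S ∩ f ⁻¹' {y}) ≤ liminf (fun p => g p y) atTop := by
      intro y
      have hr : Tendsto (fun p : ℕ => ENNReal.ofReal (2 * (1/(p+1)))) atTop (𝓝 0) := by
        have h0 : Tendsto (fun p : ℕ => 2 * (1/((p:ℝ)+1))) atTop (𝓝 0) := by
          simpa using tendsto_one_div_add_atTop_nhds_zero_nat.const_mul (2:ℝ)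
        simpa using ENNReal.tendsto_ofReal h0
      have hcover := Measure.hausdorffMeasure_le_liminf_tsum (ℓ:ℝ) (S ∩ f ⁻¹' {y})
          (fun p : ℕ => ENNReal.ofReal (2 * (1/(p+1)))) hr
          (fun p (i : t p) => Metric.closedBall (i : Fin n → ℝ) (r p i) ∩ (S ∩ f ⁻¹' {y}))
          (by
            filter_upwards with p i
            refine (hdiam p i _).trans (ENNReal.ofReal_le_ofReal ?_)
            have := hrp p i
            nlinarith [hr0 p i])
          (by
            filter_upwards with p
            intro x hx
            obtain ⟨z, hz, hxz⟩ := Set.mem_iUnion₂.1 (tcov p hx.1)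
            exact Set.mem_iUnion.2 ⟨⟨z, hz⟩, hxz, hx⟩)
      refine hcover.trans (liminf_le_liminf ?_)
      filter_upwards with p
      refine ENNReal.tsum_le_tsum fun i => ?_
      rcases Set.eq_empty_or_nonempty
          (Metric.closedBall (i : Fin n → ℝ) (r p i) ∩ (S ∩ f ⁻¹' {y})) with he | ⟨x, hx⟩
      · rw [he, EMetric.diam_empty, ENNReal.zero_rpow_of_pos hℓpos]
        exact zero_le
      · have hXS : (i : Fin n → ℝ) ∈ S := tsub p i.2
        have hCj : (i : Fin n → ℝ) ∈ C j := hXS.2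
        have hxd : ‖x - (i : Fin n → ℝ)‖ ≤ r p i := by
          rw [← dist_eq_norm]
          exact Metric.mem_closedBall.1 hx.1
        have hfx : f x = y := hx.2.2
        have hfb : ‖f x - f (i : Fin n → ℝ)‖ ≤ (j:ℝ) * (r p i)^k := by
          have happ := hCj (x - (i : Fin n → ℝ)) (hxd.trans (hrj p i))
          rw [add_sub_cancel] at happ
          refine happ.trans (mul_le_mul_of_nonneg_left ?_ (Nat.cast_nonneg j))
          exact pow_le_pow_left₀ (norm_nonneg _) hxd k
        have hy : y ∈ Metric.closedBall (f (i : Fin n → ℝ)) ((j:ℝ) * (r p i)^k) := by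
          rw [Metric.mem_closedBall, dist_eq_norm, ← hfx]
          exact hfb
        rw [Set.indicator_of_mem hy]
        exact ENNReal.rpow_le_rpow (hdiam p i _) hℓpos.le
    -- integral bound for the majorants
    set K : ℝ≥0∞ := ENNReal.ofReal (2^ℓ * (2*(j:ℝ))^m) with hKdef
    have gint : ∀ p, ∫⁻ y, g p y ≤ K * ((p : ℝ≥0∞) + 1)⁻¹ := by
      intro p
      rw [hgdef]
      simp only
      rw [lintegral_tsum (fun i =>
        (measurable_const.indicator Metric.isClosed_closedBall.measurableSet).aemeasurable)]
      have hterm : ∀ i : t p,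
          (∫⁻ y, Set.indicator (Metric.closedBall (f i) ((j:ℝ) * (r p i)^k))
            (fun _ => ENNReal.ofReal (2 * r p (i : Fin n → ℝ)) ^ (ℓ:ℝ)) y)
          ≤ K * volume (Metric.closedBall (i : Fin n → ℝ) (r p i)) := by
        intro i
        rw [lintegral_indicator_const Metric.isClosed_closedBall.measurableSet]
        have hρ0 : 0 < r p i := hr0 p i
        have hρ1 : r p i ≤ 1 := hr1 p i
        have hvol1 : volume (Metric.closedBall (f (i : Fin n → ℝ)) ((j:ℝ) * (r p i)^k))
            = ENNReal.ofReal ((2 * ((j:ℝ) * (r p i)^k))^m) := by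
          rw [Real.volume_pi_closedBall _ (by positivity), Fintype.card_fin]
        have hpow : ENNReal.ofReal (2 * r p (i : Fin n → ℝ)) ^ (ℓ:ℝ)
            = ENNReal.ofReal ((2 * r p (i : Fin n → ℝ))^ℓ) := by
          rw [ENNReal.ofReal_rpow_of_pos (by positivity), Real.rpow_natCast]
        rw [hvol1, hpow, ← ENNReal.ofReal_mul (by positivity)]
        have hfact : (2 * r p (i:Fin n → ℝ))^ℓ * (2 * ((j:ℝ) * (r p i)^k))^m
            = (2^ℓ * (2*(j:ℝ))^m) * (r p i)^(ℓ + k*m) := by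
          rw [pow_add, pow_mul, mul_pow, mul_pow, mul_pow, ← pow_mul]
          ring
        have hmono : (r p i)^(ℓ + k*m) ≤ (r p i)^n :=
          pow_le_pow_of_le_one hρ0.le hρ1 key
        have hvol2 : ENNReal.ofReal ((r p i)^n)
            ≤ volume (Metric.closedBall (i : Fin n → ℝ) (r p i)) := by
          rw [Real.volume_pi_closedBall _ hρ0.le, Fintype.card_fin]
          exact ENNReal.ofReal_le_ofReal (pow_le_pow_left₀ hρ0.le (by linarith) n)
        calc ENNReal.ofReal ((2 * r p (i:Fin n → ℝ))^ℓ * (2 * ((j:ℝ) * (r p i)^k))^m)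
            = ENNReal.ofReal ((2^ℓ * (2*(j:ℝ))^m) * (r p i)^(ℓ + k*m)) := by rw [hfact]
          _ ≤ ENNReal.ofReal ((2^ℓ * (2*(j:ℝ))^m) * (r p i)^n) := by
              apply ENNReal.ofReal_le_ofReal
              exact mul_le_mul_of_nonneg_left hmono (by positivity)
          _ = K * ENNReal.ofReal ((r p i)^n) := by
              rw [hKdef, ← ENNReal.ofReal_mul (by positivity)]
          _ ≤ K * volume (Metric.closedBall (i : Fin n → ℝ) (r p i)) :=
              mul_le_mul_right hvol2 _
      calc (∑' i : t p, ∫⁻ y, Set.indicator (Metric.closedBall (f i) ((j:ℝ) * (r p i)^k))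
            (fun _ => ENNReal.ofReal (2 * r p (i : Fin n → ℝ)) ^ (ℓ:ℝ)) y)
          ≤ ∑' i : t p, K * volume (Metric.closedBall (i : Fin n → ℝ) (r p i)) :=
            ENNReal.tsum_le_tsum hterm
        _ = K * ∑' i : t p, volume (Metric.closedBall (i : Fin n → ℝ) (r p i)) :=
            ENNReal.tsum_mul_left
        _ ≤ K * ((p : ℝ≥0∞) + 1)⁻¹ := mul_le_mul_right (tsumle p) _
    -- conclude
    have htend : Tendsto (fun p : ℕ => K * ((p : ℝ≥0∞) + 1)⁻¹) atTop (𝓝 0) := by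
      have h1 : Tendsto (fun p : ℕ => ((p : ℝ≥0∞) + 1)⁻¹) atTop (𝓝 0) := by
        have h2 := ENNReal.tendsto_inv_nat_nhds_zero.comp (tendsto_add_atTop_nat 1)
        exact h2.congr fun p => by simp [Function.comp, Nat.cast_add_one]
      have hKne : K ≠ ⊤ := ENNReal.ofReal_ne_top
      have h4 := ENNReal.Tendsto.const_mul h1 (Or.inr hKne)
      simpa using h4
    have hint0 : ∫⁻ y, liminf (fun p => g p y) atTop = 0 := by
      apply le_antisymm _ zero_le
      calc ∫⁻ y, liminf (fun p => g p y) atTop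
          ≤ liminf (fun p => ∫⁻ y, g p y) atTop := lintegral_liminf_le gmeas
        _ ≤ liminf (fun p : ℕ => K * ((p : ℝ≥0∞) + 1)⁻¹) atTop :=
            liminf_le_liminf (Eventually.of_forall gint)
        _ = 0 := htend.liminf_eq
    have hae := (lintegral_eq_zero_iff (Measurable.liminf gmeas)).1 hint0
    filter_upwards [hae] with y hy0
    have := (hpt y).trans (le_of_eq hy0)
    exact nonpos_iff_eq_zero.1 this
  filter_upwards [ae_all_iff.2 main] with y hy
  have hsub : N ∩ f ⁻¹' {y} ⊆ ⋃ j, (N ∩ C j) ∩ f ⁻¹' {y} := by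
    intro x hx
    obtain ⟨j, hj⟩ := Set.mem_iUnion.1 (hNsub hx.1)
    exact Set.mem_iUnion.2 ⟨j, hj, hx.2⟩
  exact measure_mono_null hsub (measure_iUnion_null hy)
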